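/- For a positive definite matrix P, the operator Ω_P = L_P^{-1} + R_P^{-1} satisfies Ω_P = R_P^{-1}(R_P + L_P) L_P^{-1}, and for any self-adjoint traceless matrix A, ⟨A, Ω_P(A)⟩ ≥ ⟨A, (R_P + L_P)^{-1}(A)⟩ with ⟨A, Ω_P(A)⟩ = 2 Tr(A P^{-1} A). -/

import Mathlib

open Matrix
open scoped ComplexOrder

lemma trace_form_eq {n : ℕ} (P X : Matrix (Fin n) (Fin n) ℂ) :
    (Xᴴ * P * X).trace = ∑ j, dotProduct (star (fun i => X i j)) (P *ᵥ (fun i => X i j)) := by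
  apply Finset.sum_congr rfl
  intro j _
  simp only [Matrix.diag_apply, Matrix.mul_apply, Matrix.conjTranspose_apply, dotProduct,
    Matrix.mulVec, Pi.star_apply, Finset.sum_mul, Finset.mul_sum]
  rw [Finset.sum_comm]
  apply Finset.sum_congr rfl; intro i _
  apply Finset.sum_congr rfl; intro k _
  ring

lemma trace_form_nonneg {n : ℕ} {P : Matrix (Fin n) (Fin n) ℂ} (hP : P.PosSemidef)
    (X : Matrix (Fin n) (Fin n) ℂ) : 0 ≤ (Xᴴ * P * X).trace := by
  rw [trace_form_eq]
  exact Finset.sum_nonneg fun j _ => hP.dotProduct_mulVec_nonneg _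

lemma trace_form_eq_zero {n : ℕ} {P : Matrix (Fin n) (Fin n) ℂ} (hP : P.PosDef)
    {X : Matrix (Fin n) (Fin n) ℂ} (h : (Xᴴ * P * X).trace = 0) : X = 0 := by
  rw [trace_form_eq] at h
  have hall := (Finset.sum_eq_zero_iff_of_nonneg (fun j _ => hP.posSemidef.dotProduct_mulVec_nonneg _)).mp h
  ext i j
  by_contra hx
  have hcol : (fun i => X i j) ≠ 0 := by
    intro h0
    exact hx (by simpa using congrFun h0 i)
  exact (hP.dotProduct_mulVec_pos hcol).ne' (hall j (Finset.mem_univ j))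

/-- For positive definite `P`, the operator `Ω_P = L_P⁻¹ + R_P⁻¹` satisfies
`Ω_P = R_P⁻¹ (R_P + L_P) L_P⁻¹`; moreover, for any self-adjoint traceless `A`,
with `C = (R_P + L_P)⁻¹(A)`,
`⟨A, Ω_P(A)⟩ ≥ ⟨A, (R_P + L_P)⁻¹(A)⟩` and `⟨A, Ω_P(A)⟩ = 2 Tr (A P⁻¹ A)`. -/
theorem quadratic_metric_operator_properties {n : ℕ}
    (P : Matrix (Fin n) (Fin n) ℂ) (hP : P.PosDef) :
    (∀ A : Matrix (Fin n) (Fin n) ℂ,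
        P⁻¹ * A + A * P⁻¹ = ((P⁻¹ * A) * P + P * (P⁻¹ * A)) * P⁻¹) ∧
    (∀ A C : Matrix (Fin n) (Fin n) ℂ, Aᴴ = A → A.trace = 0 →
        P * C + C * P = A →
        (Aᴴ * C).trace ≤ (Aᴴ * (P⁻¹ * A + A * P⁻¹)).trace ∧
        (Aᴴ * (P⁻¹ * A + A * P⁻¹)).trace = 2 * (A * P⁻¹ * A).trace) := by
  have hdet : IsUnit P.det := P.isUnit_iff_isUnit_det.mp hP.isUnit
  have h1 : P * P⁻¹ = 1 := Matrix.mul_nonsing_inv P hdet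
  have h2 : P⁻¹ * P = 1 := Matrix.nonsing_inv_mul P hdet
  constructor
  · intro A
    rw [Matrix.add_mul, Matrix.mul_nonsing_inv_cancel_right _ _ hdet]
    rw [show P * (P⁻¹ * A) * P⁻¹ = (P * P⁻¹) * (A * P⁻¹) by
      simp only [Matrix.mul_assoc], h1, Matrix.one_mul, add_comm]
  · intro A C hA htr hC
    -- C is Hermitian
    have hCH : Cᴴ = C := by
      have hC' : P * Cᴴ + Cᴴ * P = A := by
        have := congrArg Matrix.conjTranspose hC
        simpa [Matrix.conjTranspose_add, Matrix.conjTranspose_mul, hP.1.eq, hA, add_comm]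
          using this
      set X := C - Cᴴ with hX
      have hzero : P * X + X * P = 0 := by
        simp only [hX, Matrix.mul_sub, Matrix.sub_mul]
        rw [show P * C - P * Cᴴ + (C * P - Cᴴ * P)
            = (P * C + C * P) - (P * Cᴴ + Cᴴ * P) by abel, hC, hC', sub_self]
      have key : (Xᴴ * P * X).trace + ((Xᴴ)ᴴ * P * Xᴴ).trace = 0 := by
        have e1 : ((Xᴴ)ᴴ * P * Xᴴ).trace = (Xᴴ * (X * P)).trace := by
          rw [Matrix.conjTranspose_conjTranspose]
          exact Matrix.trace_mul_comm _ _
        have : (Xᴴ * P * X).trace + (Xᴴ * (X * P)).trace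
            = (Xᴴ * (P * X + X * P)).trace := by
          rw [Matrix.mul_add, Matrix.trace_add, Matrix.mul_assoc]
        rw [e1, this, hzero, Matrix.mul_zero, Matrix.trace_zero]
      have hXz : X = 0 := by
        have n1 := trace_form_nonneg hP.posSemidef X
        have n2 := trace_form_nonneg hP.posSemidef Xᴴ
        have : (Xᴴ * P * X).trace = 0 := le_antisymm (by
          have := add_le_add_right n2 ((Xᴴ * P * X).trace)
          rw [add_zero] at this
          calc (Xᴴ * P * X).trace ≤ (Xᴴ * P * X).trace + ((Xᴴ)ᴴ * P * Xᴴ).trace := this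
            _ = 0 := key) n1
        exact trace_form_eq_zero hP this
      exact (sub_eq_zero.mp hXz).symm
    have hCPH : (C * P)ᴴ = P * C := by
      rw [Matrix.conjTranspose_mul, hCH, hP.1.eq]
    set t1 := (Cᴴ * P * C).trace with ht1def
    set t2 := ((C * P)ᴴ * P⁻¹ * (C * P)).trace with ht2def
    have ht1 : 0 ≤ t1 := trace_form_nonneg hP.posSemidef C
    have ht2 : 0 ≤ t2 := trace_form_nonneg hP.inv.posSemidef (C * P)
    -- expansion of A * P⁻¹ * A
    have expand : A * P⁻¹ * A
        = P * (C * C) + P * (C * (P⁻¹ * (C * P))) + (C * (P * C) + C * (C * P)) := by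
      rw [← hC]
      simp only [Matrix.add_mul, Matrix.mul_add, Matrix.mul_assoc,
        Matrix.nonsing_inv_mul_cancel_left _ _ hdet,
        Matrix.mul_nonsing_inv_cancel_left _ _ hdet]
      abel
    have cyc1 : (P * (C * C)).trace = t1 := by
      rw [Matrix.trace_mul_comm, ht1def, hCH, Matrix.mul_assoc, Matrix.trace_mul_comm,
        Matrix.mul_assoc]
    have cyc2 : (C * (P * C)).trace = t1 := by
      rw [ht1def, hCH, Matrix.mul_assoc]
    have cyc3 : (C * (C * P)).trace = t1 := by
      rw [Matrix.trace_mul_comm, ht1def, hCH, Matrix.mul_assoc]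
    have cyc4 : (P * (C * (P⁻¹ * (C * P)))).trace = t2 := by
      rw [ht2def, hCPH, Matrix.mul_assoc, Matrix.mul_assoc]
    have hA2 : (A * P⁻¹ * A).trace = 3 * t1 + t2 := by
      rw [expand]
      simp only [Matrix.trace_add, cyc1, cyc2, cyc3, cyc4]
      ring
    have hA1 : (Aᴴ * C).trace = 2 * t1 := by
      rw [hA, ← hC, Matrix.add_mul, Matrix.trace_add]
      have e1 : (P * C * C).trace = t1 := by rw [Matrix.mul_assoc, cyc1]
      have e2 : (C * P * C).trace = t1 := by rw [Matrix.mul_assoc, cyc2]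
      rw [e1, e2]; ring
    have hA3 : (Aᴴ * (P⁻¹ * A + A * P⁻¹)).trace = 2 * (A * P⁻¹ * A).trace := by
      rw [hA, Matrix.mul_add, Matrix.trace_add]
      have e1 : (A * (P⁻¹ * A)).trace = (A * P⁻¹ * A).trace := by
        rw [Matrix.mul_assoc]
      have e2 : (A * (A * P⁻¹)).trace = (A * P⁻¹ * A).trace := by
        rw [Matrix.trace_mul_comm A (A * P⁻¹), Matrix.mul_assoc]
      rw [e1, e2]; ring
    refine ⟨?_, hA3⟩
    rw [hA1, hA3, hA2]
    calc (2 : ℂ) * t1 ≤ 2 * t1 + (4 * t1 + 2 * t2) := by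
          refine le_add_of_nonneg_right (add_nonneg ?_ ?_)
          · exact mul_nonneg (by norm_num) ht1
          · exact mul_nonneg (by norm_num) ht2
      _ = 2 * (3 * t1 + t2) := by ring
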